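/- Let P be a polynomial in two variables with real coefficients satisfying the reduced photon factorization constraint. Then P = 0. -/

import Mathlib

/-- Evaluation of a two-variable real polynomial at `(x, y)`. -/
noncomputable def ev (P : MvPolynomial (Fin 2) ℝ) (x y : ℝ) : ℝ :=
  MvPolynomial.eval ![x, y] P

/-- The reduced photon factorization constraint for a two-variable polynomial `P`. -/
def PhotonConstraint (P : MvPolynomial (Fin 2) ℝ) : Prop :=
  ∀ E1 E2 E3 E4 : ℝ, E1 + E2 + E3 + E4 = 0 →
    (E1 - E3) * (E2 - E4) * ev P (E1 + E3) (E1 * E3) * ev P (E2 + E4) (E2 * E4)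
    + (E1 + 2 * E2) * (2 * E3 + E4) * ev P (-E1) (-E2 * (E1 + E2)) *
        ev P (-E4) (-E3 * (E3 + E4))
    - (E1 + 2 * E4) * (E2 + 2 * E3) * ev P (-E1) (-E4 * (E1 + E4)) *
        ev P (-E2) (-E3 * (E2 + E3)) = 0

open MvPolynomial

lemma eval_comp2 (P : MvPolynomial (Fin 2) ℝ) (u v : MvPolynomial (Fin 2) ℝ)
    (z : Fin 2 → ℝ) :
    eval z (aeval ![u, v] P) = ev P (eval z u) (eval z v) := by
  induction P using MvPolynomial.induction_on with
  | C a => simp [ev]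
  | add p q hp hq => simp [ev, map_add] at *; rw [hp, hq]
  | mul_X p n hp =>
    simp only [map_mul, aeval_X, ev, eval_X] at *
    rw [hp]
    congr 1
    fin_cases n <;> simp [ev]

lemma eval_comp1 (P : MvPolynomial (Fin 2) ℝ) (u v : Polynomial ℝ) (t : ℝ) :
    Polynomial.eval t (aeval ![u, v] P) = ev P (u.eval t) (v.eval t) := by
  induction P using MvPolynomial.induction_on with
  | C a => simp [ev]
  | add p q hp hq =>
    simp only [map_add, ev, Polynomial.eval_add] at *; rw [hp, hq]
  | mul_X p n hp =>
    simp only [map_mul, aeval_X, ev, eval_X, Polynomial.eval_mul] at *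
    rw [hp]
    congr 1
    fin_cases n <;> simp [ev]

lemma ev_funext (P : MvPolynomial (Fin 2) ℝ) (hP : ∀ x y : ℝ, ev P x y = 0) :
    P = 0 := by
  apply MvPolynomial.funext
  intro z
  have hz : ![z 0, z 1] = z := by funext i; fin_cases i <;> rfl
  rw [map_zero]
  have h2 := hP (z 0) (z 1)
  rwa [ev, hz] at h2

/-- If `ev P` vanishes on the parametrized region `{(x, a x - a²)}`, then `P = 0`. -/
lemma region (P : MvPolynomial (Fin 2) ℝ)
    (hF : ∀ a x : ℝ, ev P x (a * x - a ^ 2) = 0) : P = 0 := by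
  have key : ∀ x y : ℝ, y < x ^ 2 / 4 → ev P x y = 0 := by
    intro x y hy
    set s := Real.sqrt (x ^ 2 - 4 * y) with hs
    have hs2 : s ^ 2 = x ^ 2 - 4 * y := Real.sq_sqrt (by nlinarith)
    have e : ((x - s) / 2) * x - ((x - s) / 2) ^ 2 = y := by
      linear_combination (-1/4 : ℝ) * hs2
    have := hF ((x - s) / 2) x
    rwa [e] at this
  apply ev_funext
  intro x y
  have hpoly : (aeval ![Polynomial.C x, Polynomial.X] P : Polynomial ℝ) = 0 := by
    apply Polynomial.eq_zero_of_infinite_isRoot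
    apply Set.Infinite.mono (s := Set.Iio (x ^ 2 / 4 - 1))
    · intro t ht
      simp only [Set.mem_setOf_eq, Polynomial.IsRoot, Set.mem_Iio] at *
      rw [eval_comp1]
      simp only [Polynomial.eval_C, Polynomial.eval_X]
      exact key x t (by linarith)
    · exact Set.Iio_infinite _
  have := congrArg (Polynomial.eval y) hpoly
  rw [eval_comp1] at this
  simpa using this

noncomputable def tseq : ℕ → ℝ
  | 0 => 1 / 2
  | n + 1 => (1 - Real.sqrt (1 - 4 * (tseq n / (1 + tseq n) ^ 2))) / 2

noncomputable def rseq (n : ℕ) : ℝ := tseq n / (1 + tseq n) ^ 2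

lemma tseq_mem : ∀ n, 0 < tseq n ∧ tseq n ≤ 1 / 2 := by
  intro n
  induction n with
  | zero => norm_num [tseq]
  | succ n ih =>
    obtain ⟨h0, h1⟩ := ih
    have hp : (0:ℝ) < (1 + tseq n) ^ 2 := by positivity
    have hr0 : 0 < tseq n / (1 + tseq n) ^ 2 := div_pos h0 hp
    have hr1 : 4 * (tseq n / (1 + tseq n) ^ 2) < 1 := by
      rw [mul_div_assoc', div_lt_one hp]
      nlinarith
    set r := tseq n / (1 + tseq n) ^ 2
    have hs0 : 0 < Real.sqrt (1 - 4 * r) := Real.sqrt_pos.mpr (by linarith)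
    have hs1 : Real.sqrt (1 - 4 * r) < 1 := by
      exact (Real.sqrt_lt' one_pos).2 (by nlinarith)
    constructor
    · show 0 < (1 - Real.sqrt (1 - 4 * r)) / 2
      linarith
    · show (1 - Real.sqrt (1 - 4 * r)) / 2 ≤ 1 / 2
      linarith

lemma rseq_lt (n : ℕ) : 4 * rseq n < 1 := by
  obtain ⟨h0, h1⟩ := tseq_mem n
  unfold rseq
  rw [mul_div_assoc', div_lt_one (by positivity)]
  nlinarith

lemma tseq_succ_key (n : ℕ) : tseq (n + 1) * (1 - tseq (n + 1)) = rseq n := by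
  have h : tseq (n + 1) = (1 - Real.sqrt (1 - 4 * rseq n)) / 2 := rfl
  have hs2 : Real.sqrt (1 - 4 * rseq n) ^ 2 = 1 - 4 * rseq n :=
    Real.sq_sqrt (by have := rseq_lt n; linarith)
  rw [h]; linear_combination (-1/4 : ℝ) * hs2

lemma rseq_anti : StrictAnti rseq := by
  apply strictAnti_nat_of_succ_lt
  intro n
  obtain ⟨h0, h1⟩ := tseq_mem (n + 1)
  rw [← tseq_succ_key n]
  set u := tseq (n + 1)
  show u / (1 + u) ^ 2 < u * (1 - u)
  rw [div_lt_iff₀ (by positivity)]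
  nlinarith [mul_pos (mul_pos h0 h0) (show (0:ℝ) < 1 - u - u ^ 2 by nlinarith)]

set_option maxHeartbeats 2000000 in
theorem stmt_7 (P : MvPolynomial (Fin 2) ℝ) (h : PhotonConstraint P) :
    P = 0 := by
  -- Slice E3 = 0 of the constraint
  have slice3 : ∀ a b : ℝ,
      (a + 2*b) * ev P (-a) (-(b*(a+b))) *
        (a * ev P a 0 - (a+b) * ev P (a+b) 0 + b * ev P (-b) 0) = 0 := by
    intro a b
    have H := h a b 0 (-(a+b)) (by ring)
    ring_nf at H ⊢
    linear_combination H
  -- turn it into a polynomial dichotomy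
  have key1 : ((X 0 + 2 * X 1 : MvPolynomial (Fin 2) ℝ)
      * aeval ![-X 0, -(X 1 * (X 0 + X 1))] P)
      * ((X 0 : MvPolynomial (Fin 2) ℝ) * aeval ![X 0, 0] P
        - (X 0 + X 1) * aeval ![X 0 + X 1, 0] P + X 1 * aeval ![-X 1, 0] P) = 0 := by
    apply MvPolynomial.funext
    intro z
    simp only [map_mul, map_add, map_sub, map_neg, map_zero, eval_X, map_ofNat,
      eval_comp2, map_one]
    exact slice3 (z 0) (z 1)
  rcases mul_eq_zero.mp key1 with hk1 | hk1
  · rcases mul_eq_zero.mp hk1 with hk2 | hk2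
    · exfalso
      have := congrArg (eval ![0, 1]) hk2
      simp at this
    · -- ev P (-a) (-(b*(a+b))) ≡ 0 : the region is covered
      apply region
      intro a x
      have hpt := congrArg (eval ![-x, a]) hk2
      rw [eval_comp2, map_zero] at hpt
      simp only [map_neg, map_mul, map_add, eval_X,
        Matrix.cons_val_zero, Matrix.cons_val_one, Matrix.head_cons] at hpt
      ring_nf at hpt ⊢
      linear_combination hpt
  · -- the bracket vanishes identically: `x ↦ ev P x 0` is constant
    have hB : ∀ a b : ℝ,
        a * ev P a 0 - (a+b) * ev P (a+b) 0 + b * ev P (-b) 0 = 0 := by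
      intro a b
      have := congrArg (eval ![a, b]) hk1
      rw [map_zero] at this
      simp only [map_mul, map_add, map_sub, map_neg, map_zero, eval_X,
        eval_comp2, Matrix.cons_val_zero, Matrix.cons_val_one, Matrix.head_cons] at this
      exact this
    have hq : ∀ x : ℝ, ev P x 0 = ev P 0 0 := by
      have heven : ∀ u : ℝ, u ≠ 0 → ev P (-u) 0 = ev P u 0 := by
        intro u hu
        have h1 := hB (u/2) (u/2)
        have h2 := hB (-(u/2)) (-(u/2))
        have h3 : u * (ev P (-u) 0 - ev P u 0) = 0 := by
          ring_nf at h1 h2 ⊢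
          linear_combination h1 + h2
        rcases mul_eq_zero.mp h3 with h' | h'
        · exact absurd h' hu
        · linarith [h']
      have hq2 : ∀ x : ℝ, x ≠ 0 → ev P (2*x) 0 = ev P x 0 := by
        intro x hx
        have h1 := hB x x
        have he := heven x hx
        have h3 : (2*x) * (ev P (2*x) 0 - ev P x 0) = 0 := by
          ring_nf at h1 he ⊢
          linear_combination -h1 + x * he
        rcases mul_eq_zero.mp h3 with h' | h'
        · exact absurd (by linarith : x = 0) hx
        · linarith
      set R : Polynomial ℝ := aeval ![Polynomial.X, 0] P with hRdef
      have hR : ∀ x : ℝ, R.eval x = ev P x 0 := by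
        intro x
        rw [hRdef, eval_comp1]
        simp
      have hcomp : R.comp (Polynomial.C 2 * Polynomial.X) = R := by
        apply Polynomial.funext
        intro x
        rw [Polynomial.eval_comp]
        simp only [Polynomial.eval_mul, Polynomial.eval_C, Polynomial.eval_X]
        by_cases hx : x = 0
        · rw [hx]; norm_num
        · rw [hR, hR, hq2 x hx]
      by_cases hR0 : R = 0
      · intro x
        rw [← hR x, ← hR 0, hR0]; simp
      · have hd : R.natDegree = 0 := by
          by_contra hd
          have h1 := congrArg Polynomial.leadingCoeff hcomp
          have hdq : (Polynomial.C (2:ℝ) * Polynomial.X).natDegree = 1 :=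
            Polynomial.natDegree_C_mul_X 2 (by norm_num)
          rw [Polynomial.leadingCoeff_comp (by rw [hdq]; norm_num)] at h1
          have hlc2 : (Polynomial.C (2:ℝ) * Polynomial.X).leadingCoeff = 2 := by
            simp [Polynomial.leadingCoeff_C_mul_X]
          rw [hlc2] at h1
          have hlc : R.leadingCoeff ≠ 0 := Polynomial.leadingCoeff_ne_zero.mpr hR0
          have h2 : (2:ℝ) ^ R.natDegree = 1 :=
            mul_left_cancel₀ hlc (h1.trans (mul_one R.leadingCoeff).symm)
          have h3 : (1:ℝ) < 2 ^ R.natDegree := one_lt_pow₀ (by norm_num) hd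
          linarith
        have hC : R = Polynomial.C (R.coeff 0) :=
          Polynomial.eq_C_of_natDegree_eq_zero hd
        intro x
        rw [← hR x, ← hR 0, hC]
        simp
    by_cases hc : ev P 0 0 = 0
    · -- CASE c = 0 : descent along the parabolas y = rₙ x²
      have hq0 : ∀ x : ℝ, ev P x 0 = 0 := fun x => (hq x).trans hc
      have sIII : ∀ x w : ℝ,
          (x - w) ^ 2 * (ev P (x + w) (x * w) * ev P (-(x + w)) (x * w))
          = (x - 2 * w) ^ 2
            * (ev P x (w * (x - w)) * ev P (-x) (w * (x - w))) := by
        intro x w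
        have H := h x (-x) w (-w) (by ring)
        ring_nf at H ⊢
        rw [hq0 (-x), hq0 w] at H
        linear_combination -H
      have claim : ∀ n, ∀ x : ℝ,
          ev P x (rseq n * x ^ 2) * ev P (-x) (rseq n * x ^ 2) = 0 := by
        intro n
        induction n with
        | zero =>
          intro x
          have hr0 : rseq 0 = 2 / 9 := by norm_num [rseq, tseq]
          rw [hr0]
          by_cases hx : x = 0
          · subst hx
            norm_num
            exact hq0 0
          · have H := sIII (2 * x / 3) (x / 3)
            have h2 : x ^ 2 * (ev P x (2 / 9 * x ^ 2)
                * ev P (-x) (2 / 9 * x ^ 2)) = 0 := by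
              have e1 : 2 * x / 3 + x / 3 = x := by ring
              have e2 : 2 * x / 3 * (x / 3) = 2 / 9 * x ^ 2 := by ring
              rw [e1, e2] at H
              have e3 : (2 * x / 3 - 2 * (x / 3)) = 0 := by ring
              rw [e3] at H
              have e4 : (2 * x / 3 - x / 3) ^ 2 = x ^ 2 / 9 := by ring
              rw [e4] at H
              linear_combination 9 * H
            rcases mul_eq_zero.mp h2 with hk | hk
            · exact absurd (pow_eq_zero_iff (by norm_num) |>.mp hk) hx
            · exact hk
        | succ n ih =>
          intro x
          by_cases hx : x = 0
          · subst hx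
            norm_num
            exact hq0 0
          · obtain ⟨ht0, ht1⟩ := tseq_mem (n + 1)
            set t := tseq (n + 1) with hty
            have hu : (1 + t) ≠ 0 := by linarith
            set E := x / (1 + t) with hE
            have hE0 : E ≠ 0 := div_ne_zero hx hu
            have H := sIII E (t * E)
            have e1 : E + t * E = x := by rw [hE]; field_simp
            have e2 : E * (t * E) = rseq (n + 1) * x ^ 2 := by
              rw [hE, rseq, ← hty]; field_simp
            have e3 : t * E * (E - t * E) = rseq n * E ^ 2 := by
              linear_combination E ^ 2 * tseq_succ_key n
            rw [e1, e2, e3] at H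
            rw [ih E, mul_zero] at H
            rcases mul_eq_zero.mp H with hk | hk
            · exfalso
              have hne : E - t * E ≠ 0 := by
                have h1t : 1 - t ≠ 0 := by linarith
                have he : E - t * E = E * (1 - t) := by ring
                rw [he]
                exact mul_ne_zero hE0 h1t
              exact hne (pow_eq_zero_iff (by norm_num) |>.mp hk)
            · exact hk
      -- conclude S ≡ 0, hence P = 0
      have hS1 : ∀ x : ℝ, x ≠ 0 → ∀ y : ℝ, ev P x y * ev P (-x) y = 0 := by
        intro x hx y
        have hpoly : ((aeval ![Polynomial.C x, Polynomial.X] P : Polynomial ℝ)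
            * (aeval ![Polynomial.C (-x), Polynomial.X] P : Polynomial ℝ)) = 0 := by
          apply Polynomial.eq_zero_of_infinite_isRoot
          apply Set.Infinite.mono (s := Set.range (fun n => rseq n * x ^ 2))
          · rintro s ⟨n, rfl⟩
            simp only [Set.mem_setOf_eq, Polynomial.IsRoot, Polynomial.eval_mul]
            rw [eval_comp1, eval_comp1]
            simp only [Polynomial.eval_C, Polynomial.eval_X]
            exact claim n x
          · apply Set.infinite_range_of_injective
            intro n m hnm
            exact rseq_anti.injective (mul_right_cancel₀ (pow_ne_zero 2 hx) hnm)
        have := congrArg (Polynomial.eval y) hpoly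
        rw [Polynomial.eval_mul, eval_comp1, eval_comp1] at this
        simpa using this
      have hS : ∀ x y : ℝ, ev P x y * ev P (-x) y = 0 := by
        intro x y
        by_cases hx : x = 0
        · subst hx
          have hpoly : ((aeval ![Polynomial.X, Polynomial.C y] P : Polynomial ℝ)
              * (aeval ![-Polynomial.X, Polynomial.C y] P : Polynomial ℝ)) = 0 := by
            apply Polynomial.eq_zero_of_infinite_isRoot
            apply Set.Infinite.mono (s := {0}ᶜ)
            · intro u hu
              simp only [Set.mem_compl_iff, Set.mem_singleton_iff] at hu
              simp only [Set.mem_setOf_eq, Polynomial.IsRoot, Polynomial.eval_mul]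
              rw [eval_comp1, eval_comp1]
              simp only [Polynomial.eval_X, Polynomial.eval_C, Polynomial.eval_neg]
              exact hS1 u hu y
            · exact (Set.finite_singleton 0).infinite_compl
          have := congrArg (Polynomial.eval 0) hpoly
          rw [Polynomial.eval_mul, eval_comp1, eval_comp1] at this
          simpa using this
        · exact hS1 x hx y
      have keyP : P * (aeval ![-X 0, X 1] P : MvPolynomial (Fin 2) ℝ) = 0 := by
        apply MvPolynomial.funext
        intro z
        rw [map_mul, map_zero, eval_comp2, map_neg, eval_X, eval_X]
        have hz : eval z P = ev P (z 0) (z 1) := by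
          rw [ev]
          have hzz : ![z 0, z 1] = z := by funext i; fin_cases i <;> rfl
          rw [hzz]
        rw [hz]
        exact hS (z 0) (z 1)
      rcases mul_eq_zero.mp keyP with hk | hk
      · exact hk
      · apply ev_funext
        intro x y
        have := congrArg (eval ![-x, y]) hk
        rw [eval_comp2, map_zero, map_neg, eval_X, eval_X] at this
        simpa using this
    · -- CASE c ≠ 0 : slice E4 = 0 leads to a contradiction or the covered region
      obtain ⟨c, hcdef⟩ : ∃ c : ℝ, ev P 0 0 = c := ⟨_, rfl⟩
      replace hq : ∀ x : ℝ, ev P x 0 = c := fun x => (hq x).trans hcdef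
      replace hc : c ≠ 0 := fun hcc => hc (hcdef.trans hcc)
      have slice4 : ∀ a b : ℝ,
          (a+b) * (c*(2*a+b) * ev P (-b) (-(a*b) - a^2)
            - 2*(a+2*b) * ev P (-a) (-(a*b) - b^2)
              * ev P 0 (-(a*b*2) + (-a^2 - b^2))) = 0 := by
        intro a b
        have H := h a b (-(a+b)) 0 (by ring)
        ring_nf at H ⊢
        rw [hq b, hq (-a)] at H
        linear_combination H
      have key : ∀ a b : ℝ,
          (a+b)^2 * ((2*a+b)*(a+2*b) * ev P (-b) (-(a*b) - a^2)
            * ev P (-a) (-(a*b) - b^2)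
            * (c^2 - 4 * ev P 0 (-(a*b*2) + (-a^2 - b^2))^2)) = 0 := by
        intro a b
        have I1 := slice4 a b
        have I2 := slice4 b a
        ring_nf at I1 I2 ⊢
        linear_combination ((a+b)*(c*(2*a+b)*ev P (-b) (-(a*b) - a^2)))*I2
          + ((a+b)*(2*(2*a+b)*(ev P (-b) (-(a*b) - a^2))
              * ev P 0 (-(a*b*2) - a^2 - b^2)))*I1
      have keyP : ((X 0 + X 1 : MvPolynomial (Fin 2) ℝ)^2)
          * ((2*X 0 + X 1) * ((X 0 + 2*X 1)
          * ((aeval ![-X 1, -(X 0 * X 1) - (X 0)^2] P : MvPolynomial (Fin 2) ℝ)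
          * ((aeval ![-X 0, -(X 0 * X 1) - (X 1)^2] P : MvPolynomial (Fin 2) ℝ)
          * (C (c^2) - 4 * (aeval ![0, -(X 0 * X 1 * 2) + (-(X 0)^2 - (X 1)^2)] P
              : MvPolynomial (Fin 2) ℝ)^2))))) = 0 := by
        apply MvPolynomial.funext
        intro z
        simp only [map_mul, map_add, map_sub, map_neg, map_zero, eval_X, map_ofNat,
          eval_comp2, map_one, map_pow, eval_C]
        have := key (z 0) (z 1)
        ring_nf at this ⊢
        linear_combination this
      have h1 : ((X 0 + X 1 : MvPolynomial (Fin 2) ℝ)^2) ≠ 0 := by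
        intro hk
        have := congrArg (eval ![1, 0]) hk
        simp at this
      have h2 : ((2 * X 0 + X 1 : MvPolynomial (Fin 2) ℝ)) ≠ 0 := by
        intro hk
        have := congrArg (eval ![1, 0]) hk
        simp at this
      have h3 : ((X 0 + 2 * X 1 : MvPolynomial (Fin 2) ℝ)) ≠ 0 := by
        intro hk
        have := congrArg (eval ![1, 0]) hk
        simp at this
      rcases mul_eq_zero.mp keyP with hk | hk
      · exact absurd hk h1
      rcases mul_eq_zero.mp hk with hk | hk
      · exact absurd hk h2
      rcases mul_eq_zero.mp hk with hk | hk
      · exact absurd hk h3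
      rcases mul_eq_zero.mp hk with hk | hk
      · apply region
        intro a x
        have hpt := congrArg (eval ![a, -x]) hk
        rw [eval_comp2, map_zero] at hpt
        simp only [map_neg, map_sub, map_mul, map_pow, eval_X,
          Matrix.cons_val_zero, Matrix.cons_val_one, Matrix.head_cons] at hpt
        ring_nf at hpt ⊢
        linear_combination hpt
      rcases mul_eq_zero.mp hk with hk | hk
      · apply region
        intro a x
        have hpt := congrArg (eval ![-x, a]) hk
        rw [eval_comp2, map_zero] at hpt
        simp only [map_neg, map_sub, map_mul, map_pow, eval_X,
          Matrix.cons_val_zero, Matrix.cons_val_one, Matrix.head_cons] at hpt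
        ring_nf at hpt ⊢
        linear_combination hpt
      · exfalso
        have hpt := congrArg (eval ![0, 0]) hk
        rw [map_sub, map_zero] at hpt
        simp only [map_mul, map_pow, eval_C, map_ofNat, eval_comp2, map_neg,
          map_add, map_sub, eval_X, map_zero] at hpt
        have h00 : ev P 0 0 = c := hcdef
        norm_num at hpt
        rw [h00] at hpt
        nlinarith [pow_two_pos_of_ne_zero hc]
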